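/- arXiv:2506.02950 — 3 statements merged into one kernel-verified Lean document; each statement's English description precedes it below -/
import Mathlib

section
/- For every κ ≥ 0, the level curve γ_κ : (0, L) → ℝ given by γ_κ(z) = κ·σ(z) is differentiable on (0, L) and satisfies |γ_κ′(z)| = tan(α(γ_κ(z), z)) for all z ∈ (0, L), with γ_κ′(z) ≥ 0 for z ∈ (0, d] and γ_κ′(z) ≤ 0 for z ∈ [L−d, L). That is, the level curves of the string width are tangent to the field direction: they curve away from the axis near the quark, toward the axis near the antiquark, and are straight in the middle region. -/
/-- For every `κ ≥ 0` the level curve `γ_κ(z) = κ * σ(z)` is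
differentiable on `(0, L)` with `|γ_κ'(z)| = tan (α (γ_κ(z)) z)` there; moreover
`γ_κ' ≥ 0` on `(0, d]` (curving away from the axis near the quark) and `γ_κ' ≤ 0` on
`[L - d, L)` (curving toward the axis near the antiquark). -/
theorem level_curves_tangent_to_field
    (σ₀ L d : ℝ) (hσ₀ : 0 < σ₀) (hL : 0 < L) (hd : 0 < d) (hdL : d ≤ L / 2)
    (k : ℝ) (hk : k = Real.pi / (2 * d)) (D : ℕ) (hD : 1 ≤ D)
    (σ : ℝ → ℝ)
    (hσ1 : ∀ z ∈ Set.Icc (0 : ℝ) d, σ z = σ₀ * Real.sin (k * z))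
    (hσ2 : ∀ z ∈ Set.Icc d (L - d), σ z = σ₀)
    (hσ3 : ∀ z ∈ Set.Icc (L - d) L, σ z = σ₀ * Real.sin (k * (L - z)))
    (hσ4 : ∀ z, z ∉ Set.Icc (0 : ℝ) L → σ z = 0)
    (α : ℝ → ℝ → ℝ)
    (hα1 : ∀ xp : ℝ, 0 ≤ xp → ∀ z ∈ Set.Ioc (0 : ℝ) d,
      α xp z = Real.arctan (k * xp * Real.cot (k * z)))
    (hα2 : ∀ xp : ℝ, 0 ≤ xp → ∀ z ∈ Set.Icc d (L - d), α xp z = 0)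
    (hα3 : ∀ xp : ℝ, 0 ≤ xp → ∀ z ∈ Set.Ico (L - d) L,
      α xp z = Real.arctan (k * xp * Real.cot (k * (L - z)))) :
    ∀ κ : ℝ, 0 ≤ κ →
      (∀ z ∈ Set.Ioo (0 : ℝ) L,
        DifferentiableAt ℝ (fun z => κ * σ z) z ∧
        |deriv (fun z => κ * σ z) z| = Real.tan (α (κ * σ z) z)) ∧
      (∀ z ∈ Set.Ioc (0 : ℝ) d, 0 ≤ deriv (fun z => κ * σ z) z) ∧
      (∀ z ∈ Set.Ico (L - d) L, deriv (fun z => κ * σ z) z ≤ 0) := by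
  intro κ hκ
  have hπ := Real.pi_pos
  have hk0 : 0 < k := by rw [hk]; positivity
  have hkd : k * d = Real.pi / 2 := by rw [hk]; field_simp
  have hdLd : d ≤ L - d := by linarith
  have hdL' : d < L := by linarith
  have hcoskd : Real.cos (k * d) = 0 := by rw [hkd]; exact Real.cos_pi_div_two
  -- derivative of the left sine model
  have hsin : ∀ z : ℝ, HasDerivAt (fun z => κ * σ₀ * Real.sin (k * z))
      (κ * σ₀ * k * Real.cos (k * z)) z := by
    intro z
    have h1 : HasDerivAt (fun z : ℝ => k * z) k z := by
      simpa using (hasDerivAt_id z).const_mul k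
    have h2 := (h1.sin).const_mul (κ * σ₀)
    exact h2.congr_deriv (by ring)
  -- derivative of the right sine model
  have hsinR : ∀ z : ℝ, HasDerivAt (fun z => κ * σ₀ * Real.sin (k * (L - z)))
      (-(κ * σ₀ * k * Real.cos (k * (L - z)))) z := by
    intro z
    have h1 : HasDerivAt (fun z : ℝ => k * (L - z)) (-k) z := by
      simpa using ((hasDerivAt_id z).const_sub L).const_mul k
    have h2 := (h1.sin).const_mul (κ * σ₀)
    exact h2.congr_deriv (by ring)
  -- one-sided derivatives at the gluing points
  have leftD : HasDerivWithinAt (fun z => κ * σ z) 0 (Set.Iic d) d := by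
    have h1 : HasDerivWithinAt (fun z => κ * σ₀ * Real.sin (k * z)) 0 (Set.Iic d) d := by
      have := (hsin d).hasDerivWithinAt (s := Set.Iic d)
      simpa [hcoskd] using this
    refine h1.congr_of_eventuallyEq ?_ ?_
    · filter_upwards [(eventually_gt_nhds hd).filter_mono nhdsWithin_le_nhds,
        eventually_mem_nhdsWithin] with y h1 h2
      rw [hσ1 y ⟨h1.le, h2⟩]; ring
    · rw [hσ1 d ⟨hd.le, le_refl d⟩]; ring
  have rightLd : HasDerivWithinAt (fun z => κ * σ z) 0 (Set.Ici (L - d)) (L - d) := by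
    have hc : Real.cos (k * (L - (L - d))) = 0 := by
      rw [show L - (L - d) = d by ring, hkd]; exact Real.cos_pi_div_two
    have h1 : HasDerivWithinAt (fun z => κ * σ₀ * Real.sin (k * (L - z))) 0
        (Set.Ici (L - d)) (L - d) := by
      have := (hsinR (L - d)).hasDerivWithinAt (s := Set.Ici (L - d))
      simpa [show L - (L - d) = d by ring, hcoskd] using this
    refine h1.congr_of_eventuallyEq ?_ ?_
    · filter_upwards [(eventually_lt_nhds (show L - d < L by linarith)).filter_mono
        nhdsWithin_le_nhds, eventually_mem_nhdsWithin] with y h1 h2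
      rw [hσ3 y ⟨h2, h1.le⟩]; ring
    · rw [hσ3 (L - d) ⟨le_refl _, by linarith⟩]; ring
  have midD : d < L - d → HasDerivWithinAt (fun z => κ * σ z) 0 (Set.Ici d) d := by
    intro hlt
    have h1 : HasDerivWithinAt (fun _ : ℝ => κ * σ₀) 0 (Set.Ici d) d :=
      (hasDerivAt_const d (κ * σ₀)).hasDerivWithinAt
    refine h1.congr_of_eventuallyEq ?_ ?_
    · filter_upwards [(eventually_lt_nhds hlt).filter_mono nhdsWithin_le_nhds,
        eventually_mem_nhdsWithin] with y h1 h2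
      rw [hσ2 y ⟨h2, h1.le⟩]
    · rw [hσ2 d ⟨le_refl _, hdLd⟩]
  have midLd : d < L - d → HasDerivWithinAt (fun z => κ * σ z) 0 (Set.Iic (L - d)) (L - d) := by
    intro hlt
    have h1 : HasDerivWithinAt (fun _ : ℝ => κ * σ₀) 0 (Set.Iic (L - d)) (L - d) :=
      (hasDerivAt_const (L - d) (κ * σ₀)).hasDerivWithinAt
    refine h1.congr_of_eventuallyEq ?_ ?_
    · filter_upwards [(eventually_gt_nhds hlt).filter_mono nhdsWithin_le_nhds,
        eventually_mem_nhdsWithin] with y h1 h2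
      rw [hσ2 y ⟨h1.le, h2⟩]
    · rw [hσ2 (L - d) ⟨hdLd, le_refl _⟩]
  have glue_d : HasDerivAt (fun z => κ * σ z) 0 d := by
    rcases eq_or_lt_of_le hdLd with he | hlt
    · have r : HasDerivWithinAt (fun z => κ * σ z) 0 (Set.Ici d) d := by
        rw [he]; exact rightLd
      have := leftD.union r
      rwa [Set.Iic_union_Ici, hasDerivWithinAt_univ] at this
    · have := leftD.union (midD hlt)
      rwa [Set.Iic_union_Ici, hasDerivWithinAt_univ] at this
  have glue_Ld : HasDerivAt (fun z => κ * σ z) 0 (L - d) := by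
    rcases eq_or_lt_of_le hdLd with he | hlt
    · rw [← he]; exact glue_d
    · have := (midLd hlt).union rightLd
      rwa [Set.Iic_union_Ici, hasDerivWithinAt_univ] at this
  -- derivatives on the three regions
  have hA : ∀ z ∈ Set.Ioc (0 : ℝ) d, HasDerivAt (fun z => κ * σ z)
      (κ * σ₀ * k * Real.cos (k * z)) z := by
    rintro z ⟨hz1, hz2⟩
    rcases eq_or_lt_of_le hz2 with he | hlt
    · rw [he, hkd, Real.cos_pi_div_two, mul_zero]
      exact glue_d
    · refine (hsin z).congr_of_eventuallyEq ?_
      filter_upwards [Ioo_mem_nhds hz1 hlt] with y hy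
      rw [hσ1 y ⟨hy.1.le, hy.2.le⟩]; ring
  have hB : ∀ z ∈ Set.Icc d (L - d), HasDerivAt (fun z => κ * σ z) 0 z := by
    rintro z ⟨hz1, hz2⟩
    rcases eq_or_lt_of_le hz1 with he | h1
    · rw [← he]; exact glue_d
    rcases eq_or_lt_of_le hz2 with he | h2
    · rw [he]; exact glue_Ld
    refine (hasDerivAt_const z (κ * σ₀)).congr_of_eventuallyEq ?_
    filter_upwards [Ioo_mem_nhds h1 h2] with y hy
    rw [hσ2 y ⟨hy.1.le, hy.2.le⟩]
  have hC : ∀ z ∈ Set.Ico (L - d) L, HasDerivAt (fun z => κ * σ z)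
      (-(κ * σ₀ * k * Real.cos (k * (L - z)))) z := by
    rintro z ⟨hz1, hz2⟩
    rcases eq_or_lt_of_le hz1 with he | hlt
    · rw [← he, show L - (L - d) = d by ring, hkd, Real.cos_pi_div_two, mul_zero, neg_zero]
      exact glue_Ld
    · refine (hsinR z).congr_of_eventuallyEq ?_
      filter_upwards [Ioo_mem_nhds hlt hz2] with y hy
      rw [hσ3 y ⟨hy.1.le, hy.2.le⟩]; ring
  refine ⟨?_, ?_, ?_⟩
  · rintro z ⟨hz1, hz2⟩
    rcases le_or_gt z d with h | h
    · have hA' := hA z ⟨hz1, h⟩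
      refine ⟨hA'.differentiableAt, ?_⟩
      have hkz1 : 0 < k * z := by positivity
      have hkz2 : k * z ≤ Real.pi / 2 := by
        rw [← hkd]; exact mul_le_mul_of_nonneg_left h hk0.le
      have hsinpos : 0 < Real.sin (k * z) :=
        Real.sin_pos_of_pos_of_lt_pi hkz1 (by linarith)
      have hcos : 0 ≤ Real.cos (k * z) :=
        Real.cos_nonneg_of_mem_Icc ⟨by linarith, hkz2⟩
      have hσz : σ z = σ₀ * Real.sin (k * z) := hσ1 z ⟨hz1.le, h⟩
      have hxp : 0 ≤ κ * σ z := by rw [hσz]; positivity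
      rw [hA'.deriv, hα1 _ hxp z ⟨hz1, h⟩, Real.tan_arctan, hσz,
        Real.cot_eq_cos_div_sin,
        abs_of_nonneg (mul_nonneg (mul_nonneg (mul_nonneg hκ hσ₀.le) hk0.le) hcos)]
      field_simp
    · rcases le_or_gt z (L - d) with h2 | h2
      · have hB' := hB z ⟨h.le, h2⟩
        refine ⟨hB'.differentiableAt, ?_⟩
        have hσz : σ z = σ₀ := hσ2 z ⟨h.le, h2⟩
        have hxp : 0 ≤ κ * σ z := by rw [hσz]; positivity
        rw [hB'.deriv, hα2 _ hxp z ⟨h.le, h2⟩]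
        simp
      · have hC' := hC z ⟨h2.le, hz2⟩
        refine ⟨hC'.differentiableAt, ?_⟩
        have hlz1 : 0 < k * (L - z) := by
          have : 0 < L - z := by linarith
          positivity
        have hlz2 : k * (L - z) ≤ Real.pi / 2 := by
          rw [← hkd]
          exact mul_le_mul_of_nonneg_left (by linarith) hk0.le
        have hsinpos : 0 < Real.sin (k * (L - z)) :=
          Real.sin_pos_of_pos_of_lt_pi hlz1 (by linarith)
        have hcos : 0 ≤ Real.cos (k * (L - z)) :=
          Real.cos_nonneg_of_mem_Icc ⟨by linarith, hlz2⟩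
        have hσz : σ z = σ₀ * Real.sin (k * (L - z)) := hσ3 z ⟨h2.le, hz2.le⟩
        have hxp : 0 ≤ κ * σ z := by rw [hσz]; positivity
        rw [hC'.deriv, hα3 _ hxp z ⟨h2.le, hz2⟩, Real.tan_arctan, hσz,
          Real.cot_eq_cos_div_sin, abs_neg,
          abs_of_nonneg (mul_nonneg (mul_nonneg (mul_nonneg hκ hσ₀.le) hk0.le) hcos)]
        field_simp
  · rintro z ⟨hz1, hz2⟩
    have hA' := hA z ⟨hz1, hz2⟩
    rw [hA'.deriv]
    have hkz2 : k * z ≤ Real.pi / 2 := by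
      rw [← hkd]; exact mul_le_mul_of_nonneg_left hz2 hk0.le
    have hcos : 0 ≤ Real.cos (k * z) :=
      Real.cos_nonneg_of_mem_Icc ⟨by nlinarith [mul_pos hk0 hz1], hkz2⟩
    exact mul_nonneg (mul_nonneg (mul_nonneg hκ hσ₀.le) hk0.le) hcos
  · rintro z ⟨hz1, hz2⟩
    have hC' := hC z ⟨hz1, hz2⟩
    rw [hC'.deriv]
    have hlz2 : k * (L - z) ≤ Real.pi / 2 := by
      rw [← hkd]; exact mul_le_mul_of_nonneg_left (by linarith) hk0.le
    have hcos : 0 ≤ Real.cos (k * (L - z)) := by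
      refine Real.cos_nonneg_of_mem_Icc ⟨?_, hlz2⟩
      have : 0 ≤ L - z := by linarith
      nlinarith
    have : 0 ≤ κ * σ₀ * k * Real.cos (k * (L - z)) := mul_nonneg (mul_nonneg (mul_nonneg hκ hσ₀.le) hk0.le) hcos
    linarith
end

section
/- For every κ > 0 and every z ∈ (0, L), the flux element of the realized interaction field along the stream tube bounded by the level curve x⊥ = κ·σ(z) satisfies E(κ·σ(z), z)·cos(α(κ·σ(z), z))·(κ·σ(z))^{D−1}·σ(z) = exp(−κ²/2)·κ^{D−1}; in particular this quantity is independent of z, so the realized interaction field conserves flux along stream tubes (Property 2 of a proper interaction field). -/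
/-- For every `κ > 0` and every `z ∈ (0, L)`, the flux element of the
realized interaction field along the stream tube bounded by the level curve
`xp = κ σ(z)` satisfies
`E(κσ(z), z) * cos (α(κσ(z), z)) * (κσ(z))^(D-1) * σ(z) = exp (-κ²/2) * κ^(D-1)`,
a quantity independent of `z`: the field conserves flux along stream tubes
(Property 2 of a proper interaction field). -/
theorem flux_conservation_along_stream_tubes
    (σ₀ L d : ℝ) (hσ₀ : 0 < σ₀) (hL : 0 < L) (hd : 0 < d) (hdL : d ≤ L / 2)
    (k : ℝ) (hk : k = Real.pi / (2 * d)) (D : ℕ) (hD : 1 ≤ D)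
    (σ : ℝ → ℝ)
    (hσ1 : ∀ z ∈ Set.Icc (0 : ℝ) d, σ z = σ₀ * Real.sin (k * z))
    (hσ2 : ∀ z ∈ Set.Icc d (L - d), σ z = σ₀)
    (hσ3 : ∀ z ∈ Set.Icc (L - d) L, σ z = σ₀ * Real.sin (k * (L - z)))
    (hσ4 : ∀ z, z ∉ Set.Icc (0 : ℝ) L → σ z = 0)
    (α : ℝ → ℝ → ℝ)
    (hα1 : ∀ xp : ℝ, 0 ≤ xp → ∀ z ∈ Set.Ioc (0 : ℝ) d,
      α xp z = Real.arctan (k * xp * Real.cot (k * z)))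
    (hα2 : ∀ xp : ℝ, 0 ≤ xp → ∀ z ∈ Set.Icc d (L - d), α xp z = 0)
    (hα3 : ∀ xp : ℝ, 0 ≤ xp → ∀ z ∈ Set.Ico (L - d) L,
      α xp z = Real.arctan (k * xp * Real.cot (k * (L - z))))
    (E : ℝ → ℝ → ℝ)
    (hE : ∀ xp : ℝ, 0 ≤ xp → ∀ z ∈ Set.Ioo (0 : ℝ) L,
      E xp z = Real.exp (-(xp ^ 2) / (2 * (σ z) ^ 2)) / ((σ z) ^ D * Real.cos (α xp z))) :
    ∀ κ : ℝ, 0 < κ → ∀ z ∈ Set.Ioo (0 : ℝ) L,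
      E (κ * σ z) z * Real.cos (α (κ * σ z) z) * (κ * σ z) ^ (D - 1) * σ z =
        Real.exp (-(κ ^ 2) / 2) * κ ^ (D - 1) := by

  intro κ hκ z hz
  obtain ⟨hz0, hzL⟩ := hz
  have hd0 : (2:ℝ) * d ≠ 0 := by positivity
  have hk0 : 0 < k := by rw [hk]; positivity
  have hkd : k * d = Real.pi / 2 := by rw [hk]; field_simp
  have hσpos : 0 < σ z := by
    rcases le_or_gt z d with h1 | h1
    · rw [hσ1 z ⟨le_of_lt hz0, h1⟩]
      have h2 : 0 < k * z := by positivity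
      have h3 : k * z < Real.pi := by
        have : k * z ≤ k * d := by nlinarith
        rw [hkd] at this
        linarith [Real.pi_pos]
      exact mul_pos hσ₀ (Real.sin_pos_of_pos_of_lt_pi h2 h3)
    · rcases le_or_gt z (L - d) with h2 | h2
      · rw [hσ2 z ⟨le_of_lt h1, h2⟩]; exact hσ₀
      · rw [hσ3 z ⟨le_of_lt h2, le_of_lt hzL⟩]
        have h3 : 0 < L - z := by linarith
        have h4 : 0 < k * (L - z) := by positivity
        have h5 : k * (L - z) < Real.pi := by
          have hld : L - z < d := by linarith
          have : k * (L - z) ≤ k * d := by nlinarith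
          rw [hkd] at this
          linarith [Real.pi_pos]
        exact mul_pos hσ₀ (Real.sin_pos_of_pos_of_lt_pi h4 h5)
  have hxp : 0 ≤ κ * σ z := le_of_lt (mul_pos hκ hσpos)
  have hcos : 0 < Real.cos (α (κ * σ z) z) := by
    rcases le_or_gt z d with h1 | h1
    · rw [hα1 _ hxp z ⟨hz0, h1⟩, Real.cos_arctan]; positivity
    · rcases le_or_gt z (L - d) with h2 | h2
      · rw [hα2 _ hxp z ⟨le_of_lt h1, h2⟩, Real.cos_zero]; norm_num
      · rw [hα3 _ hxp z ⟨le_of_lt h2, hzL⟩, Real.cos_arctan]; positivity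
  rw [hE _ hxp z ⟨hz0, hzL⟩]
  have hexp : Real.exp (-((κ * σ z) ^ 2) / (2 * (σ z) ^ 2)) = Real.exp (-(κ ^ 2) / 2) := by
    congr 1
    field_simp
  rw [hexp]
  obtain ⟨m, rfl⟩ : ∃ m, D = m + 1 := ⟨D - 1, (Nat.succ_pred_eq_of_pos hD).symm⟩
  simp only [Nat.add_sub_cancel]
  have hσne : σ z ≠ 0 := ne_of_gt hσpos
  have hcne : Real.cos (α (κ * σ z) z) ≠ 0 := ne_of_gt hcos
  field_simp
  ring
end

section
/- Define the vector field F on ℝ^D × (0, L) ⊆ ℝ^{D+1} by F(x, z) = E(‖x‖, z)·( sin(α(‖x‖, z))·x/‖x‖ , cos(α(‖x‖, z)) ) for x ≠ 0 and F(0, z) = E(0, z)·(0, 1). Let I ⊆ ℝ be a nontrivial interval and let γ = (γ_x, γ_z) : I → ℝ^D × (0, L) be a differentiable curve with γ′(t) = F(γ(t)) for all t ∈ I. Then the z-coordinate γ_z is strictly monotonically increasing on I. In particular no trajectory of the realized interaction field moves backwards in z, so there are no backward-oriented field lines. -/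
/-- Along any differentiable trajectory `γ` of the realized
interaction field `F` on `ℝ^D × (0, L)` (with `F(x, z)` given in cylindrical form by
the field magnitude `E` and the string angle `α`), the `z`-coordinate is strictly
increasing: no trajectory moves backwards in `z`, so there are no backward-oriented
field lines. -/
theorem no_backward_oriented_trajectories
    (σ₀ L d : ℝ) (hσ₀ : 0 < σ₀) (hL : 0 < L) (hd : 0 < d) (hdL : d ≤ L / 2)
    (k : ℝ) (hk : k = Real.pi / (2 * d)) (D : ℕ) (hD : 1 ≤ D)
    (σ : ℝ → ℝ)
    (hσ1 : ∀ z ∈ Set.Icc (0 : ℝ) d, σ z = σ₀ * Real.sin (k * z))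
    (hσ2 : ∀ z ∈ Set.Icc d (L - d), σ z = σ₀)
    (hσ3 : ∀ z ∈ Set.Icc (L - d) L, σ z = σ₀ * Real.sin (k * (L - z)))
    (hσ4 : ∀ z, z ∉ Set.Icc (0 : ℝ) L → σ z = 0)
    (α : ℝ → ℝ → ℝ)
    (hα1 : ∀ xp : ℝ, 0 ≤ xp → ∀ z ∈ Set.Ioc (0 : ℝ) d,
      α xp z = Real.arctan (k * xp * Real.cot (k * z)))
    (hα2 : ∀ xp : ℝ, 0 ≤ xp → ∀ z ∈ Set.Icc d (L - d), α xp z = 0)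
    (hα3 : ∀ xp : ℝ, 0 ≤ xp → ∀ z ∈ Set.Ico (L - d) L,
      α xp z = Real.arctan (k * xp * Real.cot (k * (L - z))))
    (E : ℝ → ℝ → ℝ)
    (hE : ∀ xp : ℝ, 0 ≤ xp → ∀ z ∈ Set.Ioo (0 : ℝ) L,
      E xp z = Real.exp (-(xp ^ 2) / (2 * (σ z) ^ 2)) / ((σ z) ^ D * Real.cos (α xp z)))
    (F : EuclideanSpace ℝ (Fin D) × ℝ → EuclideanSpace ℝ (Fin D) × ℝ)
    (hF0 : ∀ z ∈ Set.Ioo (0 : ℝ) L, F (0, z) = (0, E 0 z))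
    (hF : ∀ x : EuclideanSpace ℝ (Fin D), x ≠ 0 → ∀ z ∈ Set.Ioo (0 : ℝ) L,
      F (x, z) = ((E ‖x‖ z * Real.sin (α ‖x‖ z) / ‖x‖) • x,
        E ‖x‖ z * Real.cos (α ‖x‖ z)))
    (I : Set ℝ) (hI : I.OrdConnected) (hInt : I.Nontrivial)
    (γ : ℝ → EuclideanSpace ℝ (Fin D) × ℝ)
    (hγmem : ∀ t ∈ I, (γ t).2 ∈ Set.Ioo (0 : ℝ) L)
    (hγderiv : ∀ t ∈ I, HasDerivAt γ (F (γ t)) t) :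
    StrictMonoOn (fun t => (γ t).2) I := by

  have hkpos : 0 < k := by
    have := Real.pi_pos; rw [hk]; positivity
  have hkd : k * d = Real.pi / 2 := by
    rw [hk]; field_simp
  have hdLd : d ≤ L - d := by linarith
  have σpos : ∀ z ∈ Set.Ioo (0 : ℝ) L, 0 < σ z := by
    intro z hz
    rcases le_or_gt z d with h1 | h1
    · rw [hσ1 z ⟨hz.1.le, h1⟩]
      have hs : 0 < Real.sin (k * z) := by
        apply Real.sin_pos_of_pos_of_lt_pi (mul_pos hkpos hz.1)
        have : k * z ≤ k * d := by nlinarith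
        rw [hkd] at this
        linarith [Real.pi_pos]
      positivity
    · rcases le_or_gt z (L - d) with h2 | h2
      · rw [hσ2 z ⟨h1.le, h2⟩]; exact hσ₀
      · rw [hσ3 z ⟨h2.le, hz.2.le⟩]
        have hs : 0 < Real.sin (k * (L - z)) := by
          apply Real.sin_pos_of_pos_of_lt_pi (by nlinarith [hz.2])
          have : k * (L - z) ≤ k * d := by nlinarith [hz.2]
          rw [hkd] at this
          linarith [Real.pi_pos]
        positivity
  have cospos : ∀ xp : ℝ, 0 ≤ xp → ∀ z ∈ Set.Ioo (0 : ℝ) L, 0 < Real.cos (α xp z) := by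
    intro xp hxp z hz
    have harct : ∀ y : ℝ, 0 < Real.cos (Real.arctan y) := fun y =>
      Real.cos_pos_of_mem_Ioo ⟨Real.neg_pi_div_two_lt_arctan y, Real.arctan_lt_pi_div_two y⟩
    rcases le_or_gt z d with h1 | h1
    · rw [hα1 xp hxp z ⟨hz.1, h1⟩]; exact harct _
    · rcases le_or_gt z (L - d) with h2 | h2
      · rw [hα2 xp hxp z ⟨h1.le, h2⟩]; simp
      · rw [hα3 xp hxp z ⟨h2.le, hz.2⟩]; exact harct _
  have Epos : ∀ xp : ℝ, 0 ≤ xp → ∀ z ∈ Set.Ioo (0 : ℝ) L, 0 < E xp z := by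
    intro xp hxp z hz
    rw [hE xp hxp z hz]
    exact div_pos (Real.exp_pos _) (mul_pos (pow_pos (σpos z hz) D) (cospos xp hxp z hz))
  have key : ∀ t ∈ I, 0 < (F (γ t)).2 := by
    intro t ht
    have hz := hγmem t ht
    have heq : γ t = ((γ t).1, (γ t).2) := rfl
    by_cases hx : (γ t).1 = 0
    · rw [heq, hx, hF0 _ hz]
      exact Epos 0 le_rfl _ hz
    · rw [heq, hF (γ t).1 hx (γ t).2 hz]
      exact mul_pos (Epos _ (norm_nonneg _) _ hz) (cospos _ (norm_nonneg _) _ hz)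
  have hconv : Convex ℝ I := hI.convex
  have hderiv2 : ∀ t ∈ I, HasDerivAt (fun t => (γ t).2) (F (γ t)).2 t := by
    intro t ht
    exact (hγderiv t ht).snd
  apply strictMonoOn_of_deriv_pos hconv
  · intro t ht
    exact (hderiv2 t ht).continuousAt.continuousWithinAt
  · intro t ht
    have ht' : t ∈ I := interior_subset ht
    rw [(hderiv2 t ht').deriv]
    exact key t ht'
end
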